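/- Let k be a field, A a commutative k-algebra, a ∈ A ⊗_k A with a · τ(a) = 1 (τ the flip of A ⊗_k A), and assume μ(a) = ε·1_A where μ : A ⊗_k A → A is the multiplication map and ε ∈ {1, −1}. Let M be a finite-dimensional A-module (finite-dimensional over k) and R = R(A, a, M) the associated unitary R-matrix on M (the flip of M ⊗_k M followed by the action of a). Then for every n ≥ 2, the trace of R₁ R₂ ⋯ R_{n−1} on M^{⊗n} equals ε^{n−1} · dim_k M, where R_i = id^{⊗(i−1)} ⊗ R ⊗ id^{⊗(n−i−1)}. -/

import Mathlib

open TensorProduct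

noncomputable section

universe u

variable (k : Type u) [Field k]

/-- `W m` is the left-bracketed `(m+1)`-fold tensor power of `M`. -/
def W (M : Type u) [AddCommGroup M] [Module k M] : ℕ → ModuleCat.{u} k
  | 0 => ModuleCat.of k M
  | m + 1 => ModuleCat.of k (TensorProduct k (W M m) M)

variable {k}

/-- `RRlin Rm m i` is the endomorphism `R_{i+1} = id^{⊗i} ⊗ R ⊗ id^{⊗(m-1-i)}` of the
`(m+1)`-fold tensor power `W M m`, acting on the `(i+1)`-st and `(i+2)`-nd tensor factors,
transported along associators to the fixed left bracketing. -/
def RRlin {M : Type u} [AddCommGroup M] [Module k M]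
    (Rm : M ⊗[k] M →ₗ[k] M ⊗[k] M) : (m : ℕ) → (i : ℕ) → i + 1 ≤ m →
    Module.End k (W k M m)
  | m + 1, i, _ =>
    if hi : i + 1 ≤ m then
      TensorProduct.map (RRlin Rm m i hi) LinearMap.id
    else
      match m with
      | 0 => Rm
      | m' + 1 =>
        (TensorProduct.assoc k (W k M m') M M).symm.toLinearMap
          ∘ₗ LinearMap.lTensor (W k M m') Rm
          ∘ₗ (TensorProduct.assoc k (W k M m') M M).toLinearMap

variable (k) in
/-- The action of an element `z ∈ A ⊗[k] A` on `M ⊗[k] M`, where `x ⊗ y` acts by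
`m ⊗ n ↦ (x • m) ⊗ (y • n)`. -/
def tensorSquareAction (A : Type u) [CommRing A] [Algebra k A]
    (M : Type u) [AddCommGroup M] [Module k M] [Module A M] [IsScalarTower k A M] :
    A ⊗[k] A →ₗ[k] (M ⊗[k] M →ₗ[k] M ⊗[k] M) :=
  TensorProduct.homTensorHomMap (.id k) M M M M
    ∘ₗ TensorProduct.map (Algebra.lsmul k k M).toLinearMap (Algebra.lsmul k k M).toLinearMap

variable (k) in
/-- The map `R(A,a,M) : M ⊗[k] M → M ⊗[k] M`: the flip `m ⊗ n ↦ n ⊗ m` followed by the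
action of `a ∈ A ⊗[k] A`. -/
def Rmat (A : Type u) [CommRing A] [Algebra k A]
    (M : Type u) [AddCommGroup M] [Module k M] [Module A M] [IsScalarTower k A M]
    (a : A ⊗[k] A) : M ⊗[k] M →ₗ[k] M ⊗[k] M :=
  tensorSquareAction k A M a ∘ₗ (TensorProduct.comm k M M).toLinearMap

/-! ### Auxiliary lemmas: partial trace over the second tensor factor -/

section aux
variable {k : Type u} [Field k]
variable {M : Type u} [AddCommGroup M] [Module k M]
variable {ι : Type*} [Fintype ι] (b : Module.Basis ι k M)

/-- partial trace over the second tensor factor, defined via the basis `b` -/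
def ptr (Φ : M ⊗[k] M →ₗ[k] M ⊗[k] M) : M →ₗ[k] M :=
  ∑ j : ι, (TensorProduct.rid k M).toLinearMap
      ∘ₗ LinearMap.lTensor M (b.coord j)
      ∘ₗ Φ ∘ₗ (TensorProduct.mk k M M).flip (b j)

lemma ptr_apply (Φ : M ⊗[k] M →ₗ[k] M ⊗[k] M) (m : M) :
    ptr b Φ m = ∑ j : ι, (TensorProduct.rid k M) (LinearMap.lTensor M (b.coord j) (Φ (m ⊗ₜ b j))) := by
  simp [ptr]

lemma ptr_zero : ptr b (0 : M ⊗[k] M →ₗ[k] M ⊗[k] M) = 0 := by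
  ext m; simp [ptr_apply]

lemma ptr_add (Φ Ψ : M ⊗[k] M →ₗ[k] M ⊗[k] M) : ptr b (Φ + Ψ) = ptr b Φ + ptr b Ψ := by
  ext m; simp [ptr_apply, Finset.sum_add_distrib]

lemma trace_eq_sum_coord [DecidableEq ι] (g : M →ₗ[k] M) :
    LinearMap.trace k M g = ∑ j, b.repr (g (b j)) j := by
  rw [LinearMap.trace_eq_matrix_trace k b, Matrix.trace]
  simp [LinearMap.toMatrix_apply, Matrix.diag]

lemma ptr_map (f g : M →ₗ[k] M) :
    ptr b (TensorProduct.map f g) = (LinearMap.trace k M g) • f := by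
  classical
  ext m
  simp [ptr_apply, trace_eq_sum_coord b g, Finset.sum_smul]

lemma ptr_map_comm (f g : M →ₗ[k] M) :
    ptr b (TensorProduct.map f g ∘ₗ (TensorProduct.comm k M M).toLinearMap) = f ∘ₗ g := by
  ext m
  have : ∑ j, (b.repr (g m) j) • f (b j) = f (g m) := by
    calc ∑ j, (b.repr (g m) j) • f (b j) = f (∑ j, (b.repr (g m) j) • b j) := by
          rw [map_sum]; simp
      _ = f (g m) := by rw [b.sum_repr (g m)]
  simpa [ptr_apply, TensorProduct.smul_tmul'] using this
end aux

section aux2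
variable {k : Type u} [Field k]
variable {M : Type u} [AddCommGroup M] [Module k M] [FiniteDimensional k M]
variable {ι : Type*} [Fintype ι] (b : Module.Basis ι k M)

lemma end_tensor_induction (P : (M ⊗[k] M →ₗ[k] M ⊗[k] M) → Prop)
    (h0 : P 0) (hadd : ∀ x y, P x → P y → P (x + y))
    (hmap : ∀ f g : M →ₗ[k] M, P (TensorProduct.map f g)) :
    ∀ Φ, P Φ := by
  intro Φ
  obtain ⟨z, rfl⟩ := (homTensorHomEquiv k M M M M).surjective Φ
  rw [homTensorHomEquiv_apply]
  induction z using TensorProduct.induction_on with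
  | zero => simpa using h0
  | tmul f g => simpa using hmap f g
  | add x y hx hy => rw [map_add]; exact hadd _ _ hx hy

lemma trace_eq_trace_ptr (Φ : M ⊗[k] M →ₗ[k] M ⊗[k] M) :
    LinearMap.trace k (M ⊗[k] M) Φ = LinearMap.trace k M (ptr b Φ) := by
  induction Φ using end_tensor_induction with
  | h0 => simp [ptr_zero]
  | hadd x y hx hy => rw [map_add, ptr_add, map_add, hx, hy]
  | hmap f g =>
      rw [LinearMap.trace_tensorProduct', ptr_map, map_smul]
      simp [mul_comm, smul_eq_mul]

lemma step_trace {V : Type u} [AddCommGroup V] [Module k V] [FiniteDimensional k V]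
    (S : V ⊗[k] M →ₗ[k] V ⊗[k] M) (Φ : M ⊗[k] M →ₗ[k] M ⊗[k] M) :
    LinearMap.trace k ((V ⊗[k] M) ⊗[k] M)
      (TensorProduct.map S LinearMap.id ∘ₗ
        ((TensorProduct.assoc k V M M).symm.toLinearMap
          ∘ₗ LinearMap.lTensor V Φ
          ∘ₗ (TensorProduct.assoc k V M M).toLinearMap))
    = LinearMap.trace k (V ⊗[k] M) (S ∘ₗ LinearMap.lTensor V (ptr b Φ)) := by
  induction Φ using end_tensor_induction with
  | h0 => simp [ptr_zero]
  | hadd x y hx hy =>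
      rw [ptr_add]
      simp only [LinearMap.lTensor_add, LinearMap.comp_add, LinearMap.add_comp, map_add]
      rw [hx, hy]
  | hmap f g =>
      have key : TensorProduct.map S LinearMap.id ∘ₗ
          ((TensorProduct.assoc k V M M).symm.toLinearMap
            ∘ₗ LinearMap.lTensor V (TensorProduct.map f g)
            ∘ₗ (TensorProduct.assoc k V M M).toLinearMap)
          = TensorProduct.map (S ∘ₗ LinearMap.lTensor V f) g := by
        apply TensorProduct.ext_threefold
        intro v m n
        simp
      rw [key, LinearMap.trace_tensorProduct', ptr_map, LinearMap.lTensor_smul]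
      simp [LinearMap.comp_smul, map_smul, smul_eq_mul, mul_comm]
end aux2

section aux3
variable {k : Type u} [Field k]
variable {A : Type u} [CommRing A] [Algebra k A]
variable {M : Type u} [AddCommGroup M] [Module k M] [Module A M] [IsScalarTower k A M]
variable {ι : Type*} [Fintype ι] (b : Module.Basis ι k M)

lemma Rmat_tmul (x y : A) :
    Rmat k A M (x ⊗ₜ y) =
      TensorProduct.map (Algebra.lsmul k k M x) (Algebra.lsmul k k M y)
        ∘ₗ (TensorProduct.comm k M M).toLinearMap := by
  simp [Rmat, tensorSquareAction]

lemma ptr_Rmat (a : A ⊗[k] A) :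
    ptr b (Rmat k A M a) = Algebra.lsmul k k M (LinearMap.mul' k A a) := by
  induction a using TensorProduct.induction_on with
  | zero => simp [Rmat, ptr_zero]
  | tmul x y =>
      rw [Rmat_tmul, ptr_map_comm, LinearMap.mul'_apply, map_mul]
      rfl
  | add x y hx hy =>
      have h2 : Rmat k A M (x + y) = Rmat k A M x + Rmat k A M y := by
        simp [Rmat, map_add, LinearMap.add_comp]
      rw [h2, ptr_add, hx, hy, map_add, map_add]

lemma lsmul_algebraMap (c : k) :
    (Algebra.lsmul k k M (algebraMap k A c) : M →ₗ[k] M) = c • LinearMap.id := by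
  ext m
  simp [algebraMap_smul]
end aux3

section lists
lemma finRange_concat (n : ℕ) :
    List.finRange (n + 1) = ((List.finRange n).map Fin.castSucc) ++ [Fin.last n] := by
  induction n with
  | zero => decide
  | succ n ih =>
      conv_lhs => rw [List.finRange_succ]
      conv_rhs => rw [List.finRange_succ]
      rw [ih]
      simp only [List.map_cons, List.map_append, List.map_map, Function.comp_def, Fin.succ_castSucc,
        Fin.succ_last, List.cons_append, List.map_nil, Fin.castSucc_zero]

variable {k : Type u} [Field k] {V M : Type u} [AddCommGroup M] [Module k M]
  [AddCommGroup V] [Module k V]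

lemma prod_map_rTensor' {α : Type*} (g : α → (V →ₗ[k] V)) (l : List α) :
    ((l.map fun i => TensorProduct.map (g i) (LinearMap.id : M →ₗ[k] M)).prod)
      = TensorProduct.map (l.map g).prod LinearMap.id := by
  induction l with
  | nil => simp [Module.End.one_eq_id, TensorProduct.map_id]
  | cons a l ih =>
      rw [List.map_cons, List.map_cons, List.prod_cons, List.prod_cons, ih,
        Module.End.mul_eq_comp, Module.End.mul_eq_comp, ← TensorProduct.map_comp,
        LinearMap.id_comp]
end lists

instance W_fd {k : Type u} [Field k] (M : Type u) [AddCommGroup M] [Module k M]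
    [FiniteDimensional k M] :
    ∀ m, FiniteDimensional k (W k M m)
  | 0 => inferInstanceAs (FiniteDimensional k M)
  | m + 1 => by
      haveI : FiniteDimensional k (W k M m) := W_fd M m
      exact inferInstanceAs (FiniteDimensional k ((W k M m) ⊗[k] M))

section decomp
variable {k : Type u} [Field k] {M : Type u} [AddCommGroup M] [Module k M]

lemma prod_decomp (Rm : M ⊗[k] M →ₗ[k] M ⊗[k] M) (m'' : ℕ) :
    (((List.finRange (m'' + 2)).map fun i => RRlin Rm (m'' + 2) i.val i.isLt).prod)
    = TensorProduct.map
        (((List.finRange (m'' + 1)).map fun i => RRlin Rm (m'' + 1) i.val i.isLt).prod)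
        LinearMap.id
      ∘ₗ ((TensorProduct.assoc k (W k M m'') M M).symm.toLinearMap
          ∘ₗ LinearMap.lTensor (W k M m'') Rm
          ∘ₗ (TensorProduct.assoc k (W k M m'') M M).toLinearMap) := by
  have hfun : ((fun i : Fin (m'' + 2) => RRlin Rm (m'' + 2) i.val i.isLt) ∘ Fin.castSucc)
      = fun i : Fin (m'' + 1) =>
          TensorProduct.map (RRlin Rm (m'' + 1) i.val i.isLt) (LinearMap.id (M := M)) := by
    funext i
    simp only [Function.comp_apply]
    rw [RRlin]; refine (dif_pos (show ((Fin.castSucc i) : ℕ) + 1 ≤ m'' + 1 by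
      rw [Fin.coe_castSucc]; exact i.isLt)).trans ?_
    rfl
  have hlast : RRlin Rm (m'' + 2) (Fin.last (m'' + 1)).val (Fin.last (m'' + 1)).isLt
      = (TensorProduct.assoc k (W k M m'') M M).symm.toLinearMap
          ∘ₗ LinearMap.lTensor (W k M m'') Rm
          ∘ₗ (TensorProduct.assoc k (W k M m'') M M).toLinearMap := by
    rw [RRlin]; exact dif_neg (by simp)
  rw [finRange_concat, List.map_append, List.prod_append, List.map_map, hfun]
  exact congrArg₂ (· * ·) (prod_map_rTensor' _ _)
    (by rw [List.map_singleton, List.prod_singleton]; exact hlast)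
end decomp

section main
variable {k : Type u} [Field k]
variable {A : Type u} [CommRing A] [Algebra k A]
variable {M : Type u} [AddCommGroup M] [Module k M] [Module A M] [IsScalarTower k A M]
variable [FiniteDimensional k M]

lemma key_trace (a : A ⊗[k] A) (ε : k)
    (hμ : LinearMap.mul' k A a = algebraMap k A ε) :
    ∀ m : ℕ, 1 ≤ m →
      LinearMap.trace k (W k M m)
          (((List.finRange m).map fun i =>
              RRlin (Rmat k A M a) m i.val i.isLt).prod)
        = ε ^ m * (Module.finrank k M : k) := by
  have b := Module.finBasis k M
  intro m
  induction m with
  | zero => omega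
  | succ m' ih =>
    intro _
    match m', ih with
    | 0, _ =>
        rw [show List.finRange 1 = [(0 : Fin 1)] by decide, List.map_singleton,
          List.prod_singleton]
        have hbase : LinearMap.trace k (M ⊗[k] M) (Rmat k A M a)
            = ε ^ 1 * (Module.finrank k M : k) := by
          rw [trace_eq_trace_ptr b, ptr_Rmat b a, hμ, lsmul_algebraMap, map_smul,
            LinearMap.trace_id]
          simp [pow_one, smul_eq_mul]
        exact hbase
    | m'' + 1, ih =>
        rw [prod_decomp]
        set S := ((List.finRange (m'' + 1)).map fun i =>
            RRlin (Rmat k A M a) (m'' + 1) i.val i.isLt).prod with hS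
        have ih' : LinearMap.trace k ((W k M m'') ⊗[k] M) S
            = ε ^ (m'' + 1) * (Module.finrank k M : k) := ih (by omega)
        have hgoal : LinearMap.trace k (((W k M m'') ⊗[k] M) ⊗[k] M)
            (TensorProduct.map S LinearMap.id ∘ₗ
              ((TensorProduct.assoc k (W k M m'') M M).symm.toLinearMap
                ∘ₗ LinearMap.lTensor (W k M m'') (Rmat k A M a)
                ∘ₗ (TensorProduct.assoc k (W k M m'') M M).toLinearMap))
            = ε ^ (m'' + 2) * (Module.finrank k M : k) := by
          refine (step_trace b S (Rmat k A M a)).trans ?_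
          rw [ptr_Rmat b a, hμ, lsmul_algebraMap,
            LinearMap.lTensor_smul, LinearMap.lTensor_id]
          show LinearMap.trace k (W k M (m'' + 1)) (S ∘ₗ (ε • (LinearMap.id : Module.End k (W k M (m'' + 1))))) = _
          rw [LinearMap.comp_smul,
            LinearMap.comp_id, map_smul, ih (by omega)]
          rw [smul_eq_mul, ← mul_assoc, ← pow_succ']
        exact hgoal
end main

/-- for `R = R(A,a,M)` with `a·τ(a) = 1` and `μ(a) = ε·1` (`ε = ±1`), the trace
of `R₁ R₂ ⋯ R_{n-1}` on `M^{⊗n}` equals `ε^{n-1}·dim_k M` for every `n ≥ 2`. -/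
theorem trace_of_R_matrix_from_commutative_algebra
    (A : Type u) [CommRing A] [Algebra k A]
    (M : Type u) [AddCommGroup M] [Module k M] [Module A M] [IsScalarTower k A M]
    [FiniteDimensional k M]
    (a : A ⊗[k] A) (ha : a * (Algebra.TensorProduct.comm k A A) a = 1)
    (ε : k) (hε : ε = 1 ∨ ε = -1)
    (hμ : LinearMap.mul' k A a = algebraMap k A ε)
    (n : ℕ) (hn : 2 ≤ n) :
    LinearMap.trace k (W k M (n - 1))
        (((List.finRange (n - 1)).map fun i =>
            RRlin (Rmat k A M a) (n - 1) i.val i.isLt).prod)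
      = ε ^ (n - 1) * (Module.finrank k M : k) :=
  key_trace a ε hμ (n - 1) (by omega)

end
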